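/- For every positive integer n: (i) Σ_{l=1}^{n} C(n,l)·⌊(n−l)/2⌋ = (n−1)·2^{n−2} − ⌊n/2⌋; and (ii) Σ_{l=1}^{n} C(n,l)·⌊(n−l)/3⌋ = ((n−2)/3)·2^{n−1} − n/3 + δ, where δ depends only on n mod 6 and equals 1/3, 2/3, 2/3, −1/3, 0, 2/3 for n ≡ 0, 1, 2, 3, 4, 5 (mod 6) respectively. -/

import Mathlib

open Finset

/-- The constant `δ`, depending on the residue of `n` modulo `6`. -/
def deltaOf (n : ℕ) : ℚ :=
  if n % 6 = 0 then 1/3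
  else if n % 6 = 1 then 2/3
  else if n % 6 = 2 then 2/3
  else if n % 6 = 3 then -1/3
  else if n % 6 = 4 then 0
  else 2/3

private def cc (n j : ℕ) : ℚ := (-1 : ℚ) ^ n * (if (n + j) % 3 = 0 then 2 else -1)

private lemma cc_rec (n j : ℕ) : cc (n+1) j = cc n j + cc n ((j+2) % 3) := by
  unfold cc
  split_ifs <;> first | omega | (rw [pow_succ]; ring)

private lemma sum_filter_choose (n : ℕ) : ∀ j, j < 3 →
    3 * ∑ k ∈ range (n+1), (if k % 3 = j then (n.choose k : ℚ) else 0) = 2 ^ n + cc n j := by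
  induction n with
  | zero =>
    intro j hj
    interval_cases j <;> norm_num [cc]
  | succ n ih =>
    intro j hj
    rw [Finset.sum_range_succ']
    have pascal : ∀ i : ℕ, ((n+1).choose (i+1) : ℚ) = n.choose i + n.choose (i+1) := by
      intro i
      rw [Nat.choose_succ_succ n i]
      push_cast
      ring
    have hsum : (∑ i ∈ range (n+1), if (i+1) % 3 = j then ((n+1).choose (i+1) : ℚ) else 0)
        = (∑ i ∈ range (n+1), if i % 3 = (j+2) % 3 then (n.choose i : ℚ) else 0)
          + (∑ i ∈ range (n+1), if (i+1) % 3 = j then (n.choose (i+1) : ℚ) else 0) := by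
      rw [← Finset.sum_add_distrib]
      refine Finset.sum_congr rfl fun i _ => ?_
      have hiff : (i+1) % 3 = j ↔ i % 3 = (j+2) % 3 := by omega
      by_cases hc : (i+1) % 3 = j
      · rw [if_pos hc, if_pos (hiff.mp hc), if_pos hc, pascal]
      · rw [if_neg hc, if_neg (fun h => hc (hiff.mpr h)), if_neg hc, add_zero]
    have hshift : (∑ i ∈ range (n+1), if (i+1) % 3 = j then (n.choose (i+1) : ℚ) else 0)
        = (∑ k ∈ range (n+1), if k % 3 = j then (n.choose k : ℚ) else 0)
          - (if 0 % 3 = j then (n.choose 0 : ℚ) else 0) := by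
      have h2 : (∑ k ∈ range (n+2), if k % 3 = j then (n.choose k : ℚ) else 0)
          = (∑ i ∈ range (n+1), if (i+1) % 3 = j then (n.choose (i+1) : ℚ) else 0)
            + (if 0 % 3 = j then (n.choose 0 : ℚ) else 0) := Finset.sum_range_succ' _ _
      have h1 : (∑ k ∈ range (n+2), if k % 3 = j then (n.choose k : ℚ) else 0)
          = (∑ k ∈ range (n+1), if k % 3 = j then (n.choose k : ℚ) else 0) := by
        rw [Finset.sum_range_succ]
        simp [Nat.choose_succ_self]
      rw [h1] at h2
      linarith
    rw [hsum, hshift]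
    have H1 := ih j hj
    have H2 := ih ((j+2) % 3) (by omega)
    have hc := cc_rec n j
    have hch : ((n+1).choose 0 : ℚ) = (n.choose 0 : ℚ) := by simp
    have hp : (2:ℚ)^(n+1) = 2 * 2^n := by rw [pow_succ]; ring
    rw [hch]
    linarith

private lemma alt_sum (n : ℕ) (hn : 1 ≤ n) :
    ∑ k ∈ range (n+1), (-1:ℚ)^k * n.choose k = 0 := by
  have h := add_pow (-1 : ℚ) 1 n
  rw [neg_add_cancel, zero_pow (by omega : n ≠ 0)] at h
  simpa using h.symm

private lemma sum_cast_choose (n : ℕ) :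
    (∑ k ∈ range (n+1), (n.choose k : ℚ)) = 2 ^ n := by
  exact_mod_cast Nat.sum_range_choose n

private lemma sum_filter_choose2 (n : ℕ) (hn : 1 ≤ n) (j : ℕ) (hj : j < 2) :
    ∑ k ∈ range (n+1), (if k % 2 = j then (n.choose k : ℚ) else 0) = 2 ^ (n-1) := by
  have hadd : (∑ k ∈ range (n+1), (if k % 2 = 0 then (n.choose k : ℚ) else 0))
      + (∑ k ∈ range (n+1), (if k % 2 = 1 then (n.choose k : ℚ) else 0)) = 2 ^ n := by
    rw [← Finset.sum_add_distrib, ← sum_cast_choose n]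
    refine Finset.sum_congr rfl fun k _ => ?_
    by_cases h : k % 2 = 0
    · rw [if_pos h, if_neg (by omega), add_zero]
    · rw [if_neg h, if_pos (by omega), zero_add]
  have hsub : (∑ k ∈ range (n+1), (if k % 2 = 0 then (n.choose k : ℚ) else 0))
      - (∑ k ∈ range (n+1), (if k % 2 = 1 then (n.choose k : ℚ) else 0)) = 0 := by
    rw [← Finset.sum_sub_distrib]
    have heq : ∀ k ∈ range (n+1),
        (if k % 2 = 0 then (n.choose k : ℚ) else 0) - (if k % 2 = 1 then (n.choose k : ℚ) else 0)
          = (-1:ℚ)^k * n.choose k := by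
      intro k _
      by_cases h : k % 2 = 0
      · rw [if_pos h, if_neg (by omega), (Nat.even_iff.mpr h).neg_one_pow]; ring
      · rw [if_neg h, if_pos (by omega), (Nat.odd_iff.mpr (by omega)).neg_one_pow]; ring
    rw [Finset.sum_congr rfl heq, alt_sum n hn]
  have hp : (2:ℚ)^n = 2 * 2^(n-1) := by
    conv_lhs => rw [show n = (n-1)+1 by omega]
    rw [pow_succ]; ring
  interval_cases j <;> linarith

private lemma sum_mul_choose (n : ℕ) (hn : 1 ≤ n) :
    ∑ k ∈ range (n+1), (k : ℚ) * n.choose k = n * 2 ^ (n-1) := by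
  obtain ⟨m, rfl⟩ : ∃ m, n = m + 1 := ⟨n - 1, by omega⟩
  have hnat : ∑ k ∈ range (m+2), k * (m+1).choose k = (m+1) * 2 ^ m := by
    rw [Finset.sum_range_succ']
    have h : ∀ i ∈ range (m+1), (i+1) * (m+1).choose (i+1) = (m+1) * m.choose i := by
      intro i _
      rw [mul_comm (i+1)]
      exact (Nat.add_one_mul_choose_eq m i).symm
    rw [Finset.sum_congr rfl h, ← Finset.mul_sum, Nat.sum_range_choose]
    simp
  have h2 := congrArg (Nat.cast (R := ℚ)) hnat
  push_cast at h2
  simpa using h2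

private lemma sum_choose_nsub (n : ℕ) (hn : 1 ≤ n) :
    ∑ k ∈ range (n+1), (n.choose k : ℚ) * ((n - k : ℕ) : ℚ) = n * 2 ^ (n-1) := by
  have h1 : ∀ k ∈ range (n+1), (n.choose k : ℚ) * ((n - k : ℕ) : ℚ)
      = (n:ℚ) * n.choose k - (k:ℚ) * n.choose k := by
    intro k hk
    have hk' : k ≤ n := by
      have := Finset.mem_range.mp hk; omega
    rw [Nat.cast_sub hk']; ring
  rw [Finset.sum_congr rfl h1, Finset.sum_sub_distrib, ← Finset.mul_sum,
      sum_mul_choose n hn, sum_cast_choose n]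
  have hp : (2:ℚ)^n = 2 * 2^(n-1) := by
    conv_lhs => rw [show n = (n-1)+1 by omega]
    rw [pow_succ]; ring
  rw [hp]; ring

private lemma sum_choose_mod2 (n : ℕ) (hn : 1 ≤ n) :
    ∑ k ∈ range (n+1), (n.choose k : ℚ) * (((n - k) % 2 : ℕ) : ℚ) = 2 ^ (n-1) := by
  have h1 : ∀ k ∈ range (n+1), (n.choose k : ℚ) * (((n - k) % 2 : ℕ) : ℚ)
      = (if k % 2 = (n+1) % 2 then (n.choose k : ℚ) else 0) := by
    intro k hk
    have hk' : k ≤ n := by have := Finset.mem_range.mp hk; omega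
    by_cases hc : k % 2 = (n+1) % 2
    · have h : ((n - k) % 2 : ℕ) = 1 := by omega
      rw [h, if_pos hc]; norm_num
    · have h : ((n - k) % 2 : ℕ) = 0 := by omega
      rw [h, if_neg hc]; norm_num
  rw [Finset.sum_congr rfl h1]
  exact sum_filter_choose2 n hn _ (Nat.mod_lt _ (by norm_num))

private lemma sum_choose_mod3 (n : ℕ) :
    3 * ∑ k ∈ range (n+1), (n.choose k : ℚ) * (((n - k) % 3 : ℕ) : ℚ)
      = 3 * 2 ^ n + cc n ((n+2) % 3) + 2 * cc n ((n+1) % 3) := by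
  have h1 : ∀ k ∈ range (n+1), (n.choose k : ℚ) * (((n - k) % 3 : ℕ) : ℚ)
      = (if k % 3 = (n+2) % 3 then (n.choose k : ℚ) else 0)
        + 2 * (if k % 3 = (n+1) % 3 then (n.choose k : ℚ) else 0) := by
    intro k hk
    have hk' : k ≤ n := by have := Finset.mem_range.mp hk; omega
    by_cases hc1 : k % 3 = (n+2) % 3
    · have h : ((n - k) % 3 : ℕ) = 1 := by omega
      rw [h, if_pos hc1, if_neg (by omega)]; norm_num
    · by_cases hc2 : k % 3 = (n+1) % 3
      · have h : ((n - k) % 3 : ℕ) = 2 := by omega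
        rw [h, if_neg hc1, if_pos hc2]; push_cast; ring
      · have h : ((n - k) % 3 : ℕ) = 0 := by omega
        rw [h, if_neg hc1, if_neg hc2]; norm_num
  rw [Finset.sum_congr rfl h1, Finset.sum_add_distrib, ← Finset.mul_sum]
  have H1 := sum_filter_choose n ((n+2) % 3) (Nat.mod_lt _ (by norm_num))
  have H2 := sum_filter_choose n ((n+1) % 3) (Nat.mod_lt _ (by norm_num))
  linarith

private lemma key3q (n : ℕ) :
    3 * ((n % 3 : ℕ) : ℚ) - cc n ((n+2) % 3) - 2 * cc n ((n+1) % 3) = 9 * deltaOf n := by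
  unfold cc deltaOf
  have hpow : (-1:ℚ)^n = if n % 2 = 0 then 1 else -1 := by
    split_ifs with h
    · exact Even.neg_one_pow (Nat.even_iff.2 h)
    · exact Odd.neg_one_pow (Nat.odd_iff.2 (by omega))
  rw [hpow]
  rcases (by omega : n % 6 = 0 ∨ n % 6 = 1 ∨ n % 6 = 2 ∨ n % 6 = 3 ∨ n % 6 = 4 ∨ n % 6 = 5)
    with h|h|h|h|h|h <;>
  · first
    | (rw [h, (by omega : n % 2 = 0), (by omega : n % 3 = 0),
        (by omega : (n + (n+2) % 3) % 3 = 2), (by omega : (n + (n+1) % 3) % 3 = 1)]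
       norm_num)
    | (rw [h, (by omega : n % 2 = 1), (by omega : n % 3 = 1),
        (by omega : (n + (n+2) % 3) % 3 = 1), (by omega : (n + (n+1) % 3) % 3 = 0)]
       norm_num)
    | (rw [h, (by omega : n % 2 = 0), (by omega : n % 3 = 2),
        (by omega : (n + (n+2) % 3) % 3 = 0), (by omega : (n + (n+1) % 3) % 3 = 2)]
       norm_num)
    | (rw [h, (by omega : n % 2 = 1), (by omega : n % 3 = 0),
        (by omega : (n + (n+2) % 3) % 3 = 2), (by omega : (n + (n+1) % 3) % 3 = 1)]
       norm_num)
    | (rw [h, (by omega : n % 2 = 0), (by omega : n % 3 = 1),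
        (by omega : (n + (n+2) % 3) % 3 = 1), (by omega : (n + (n+1) % 3) % 3 = 0)]
       norm_num)
    | (rw [h, (by omega : n % 2 = 1), (by omega : n % 3 = 2),
        (by omega : (n + (n+2) % 3) % 3 = 0), (by omega : (n + (n+1) % 3) % 3 = 2)]
       norm_num)

private lemma sum_icc_eq (f : ℕ → ℚ) (n : ℕ) :
    ∑ l ∈ Icc 1 n, f l = (∑ l ∈ range (n+1), f l) - f 0 := by
  have h : range (n+1) = insert 0 (Icc 1 n) := by
    ext x
    simp only [Finset.mem_range, Finset.mem_insert, Finset.mem_Icc]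
    omega
  rw [h, Finset.sum_insert (by simp)]
  ring

private lemma key_div3 (m : ℕ) :
    3 * ((m / 3 : ℕ) : ℚ) = (m : ℚ) - ((m % 3 : ℕ) : ℚ) := by
  have h : (m : ℚ) = 3 * ((m / 3 : ℕ) : ℚ) + ((m % 3 : ℕ) : ℚ) := by
    exact_mod_cast congrArg (Nat.cast (R := ℚ)) (by omega : m = 3 * (m / 3) + m % 3)
  linarith

private lemma key_div2 (m : ℕ) :
    2 * ((m / 2 : ℕ) : ℚ) = (m : ℚ) - ((m % 2 : ℕ) : ℚ) := by
  have h : (m : ℚ) = 2 * ((m / 2 : ℕ) : ℚ) + ((m % 2 : ℕ) : ℚ) := by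
    exact_mod_cast congrArg (Nat.cast (R := ℚ)) (by omega : m = 2 * (m / 2) + m % 2)
  linarith

theorem lange_schreieder_explicit_sums (n : ℕ) (hn : 1 ≤ n) :
    (∑ l ∈ Icc 1 n, (n.choose l : ℤ) * ((n - l) / 2 : ℕ) =
      ((n : ℤ) - 1) * 2 ^ (n - 2) - ((n / 2 : ℕ) : ℤ)) ∧
    (∑ l ∈ Icc 1 n, (n.choose l : ℚ) * ((n - l) / 3 : ℕ) =
      ((n : ℚ) - 2) / 3 * 2 ^ (n - 1) - (n : ℚ) / 3 + deltaOf n) := by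
  constructor
  · -- part (i)
    have hq : ∑ l ∈ Icc 1 n, (n.choose l : ℚ) * (((n - l) / 2 : ℕ) : ℚ)
        = ((n : ℚ) - 1) * 2 ^ (n - 2) - ((n / 2 : ℕ) : ℚ) := by
      rcases Nat.lt_or_ge n 2 with h2 | h2
      · obtain rfl : n = 1 := by omega
        norm_num
      · have hsum := sum_icc_eq (fun l => (n.choose l : ℚ) * (((n - l) / 2 : ℕ) : ℚ)) n
        rw [hsum]
        have e1 : ∀ k ∈ range (n+1), 2 * ((n.choose k : ℚ) * (((n - k) / 2 : ℕ) : ℚ))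
            = (n.choose k : ℚ) * ((n - k : ℕ) : ℚ)
              - (n.choose k : ℚ) * (((n - k) % 2 : ℕ) : ℚ) := by
          intro k _
          rw [show (2:ℚ) * ((n.choose k : ℚ) * (((n - k) / 2 : ℕ) : ℚ))
              = (n.choose k : ℚ) * (2 * (((n - k) / 2 : ℕ) : ℚ)) from by ring, key_div2 (n-k)]
          ring
        have E : 2 * ∑ k ∈ range (n+1), (n.choose k : ℚ) * (((n - k) / 2 : ℕ) : ℚ)
            = n * 2 ^ (n-1) - 2 ^ (n-1) := by
          rw [Finset.mul_sum, Finset.sum_congr rfl e1, Finset.sum_sub_distrib,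
              sum_choose_nsub n hn, sum_choose_mod2 n hn]
        have hf0 : 2 * ((n.choose 0 : ℚ) * (((n - 0) / 2 : ℕ) : ℚ)) = (n:ℚ) - ((n % 2 : ℕ) : ℚ) := by
          simpa using key_div2 n
        have hd2 : 2 * ((n / 2 : ℕ) : ℚ) = (n:ℚ) - ((n % 2 : ℕ) : ℚ) := key_div2 n
        have hp : (2:ℚ)^(n-1) = 2 * 2^(n-2) := by
          conv_lhs => rw [show n - 1 = (n-2)+1 by omega]
          rw [pow_succ]; ring
        linear_combination E / 2 + ((n:ℚ) - 1) / 2 * hp - hf0 / 2 + hd2 / 2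
    have h2 : ((∑ l ∈ Icc 1 n, (n.choose l : ℤ) * ((n - l) / 2 : ℕ) : ℤ) : ℚ)
        = ((((n : ℤ) - 1) * 2 ^ (n - 2) - ((n / 2 : ℕ) : ℤ) : ℤ) : ℚ) := by
      push_cast
      convert hq using 2 <;> norm_cast
    exact_mod_cast h2
  · -- part (ii)
    have hsum := sum_icc_eq (fun l => (n.choose l : ℚ) * (((n - l) / 3 : ℕ) : ℚ)) n
    rw [hsum]
    have e1 : ∀ k ∈ range (n+1), 3 * ((n.choose k : ℚ) * (((n - k) / 3 : ℕ) : ℚ))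
        = (n.choose k : ℚ) * ((n - k : ℕ) : ℚ)
          - (n.choose k : ℚ) * (((n - k) % 3 : ℕ) : ℚ) := by
      intro k _
      rw [show (3:ℚ) * ((n.choose k : ℚ) * (((n - k) / 3 : ℕ) : ℚ))
          = (n.choose k : ℚ) * (3 * (((n - k) / 3 : ℕ) : ℚ)) from by ring, key_div3 (n-k)]
      ring
    have h1 : 3 * ∑ k ∈ range (n+1), (n.choose k : ℚ) * (((n - k) / 3 : ℕ) : ℚ)
        = (∑ k ∈ range (n+1), (n.choose k : ℚ) * ((n - k : ℕ) : ℚ))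
          - (∑ k ∈ range (n+1), (n.choose k : ℚ) * (((n - k) % 3 : ℕ) : ℚ)) := by
      rw [Finset.mul_sum, ← Finset.sum_sub_distrib]
      exact Finset.sum_congr rfl e1
    have hT1 := sum_choose_nsub n hn
    have hT3 := sum_choose_mod3 n
    have hkey := key3q n
    have hf0 : 3 * ((n.choose 0 : ℚ) * (((n - 0) / 3 : ℕ) : ℚ)) = (n:ℚ) - ((n % 3 : ℕ) : ℚ) := by
      simpa using key_div3 n
    have hp : (2:ℚ)^n = 2 * 2^(n-1) := by
      conv_lhs => rw [show n = (n-1)+1 by omega]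
      rw [pow_succ]; ring
    linear_combination h1 / 3 + hT1 / 3 - hT3 / 9 + hkey / 9 - hf0 / 3 - hp / 3
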